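/- For all natural numbers p and q, the real Clifford algebra Cl_{p,q+2}(ℝ) is isomorphic, as an ℝ-algebra, to the tensor product Cl_{q,p}(ℝ) ⊗_ℝ ℍ, where ℍ is the real quaternion algebra. -/

import Mathlib

/-- The quadratic form of signature `(p, q)` on `Fin (p+q) → ℝ`:
`Q(v) = ∑_{i < p} v i ^ 2 - ∑_{p ≤ i < p+q} v i ^ 2`. -/
noncomputable def Qpq (p q : ℕ) : QuadraticForm ℝ (Fin (p + q) → ℝ) :=
  QuadraticMap.weightedSumSquares ℝ
    (fun i : Fin (p + q) => if (i : ℕ) < p then (1 : ℝ) else -1)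

set_option maxHeartbeats 1600000
set_option synthInstance.maxHeartbeats 1000000

namespace CliffPeriod

open CliffordAlgebra
open scoped Quaternion TensorProduct

theorem sum_sum_eq_diag {A : Type*} [AddCommGroup A] {ι : Type*} [DecidableEq ι] (s : Finset ι)
    (h : ι → ι → A) (hh : ∀ i j, i ≠ j → h i j + h j i = 0) :
    ∑ i ∈ s, ∑ j ∈ s, h i j = ∑ i ∈ s, h i i := by
  classical
  induction s using Finset.induction_on with
  | empty => simp
  | @insert a t ha ih =>
    simp only [Finset.sum_insert ha]
    rw [Finset.sum_add_distrib, ih]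
    have h0 : ∑ j ∈ t, h a j + ∑ i ∈ t, h i a = 0 := by
      rw [← Finset.sum_add_distrib]
      exact Finset.sum_eq_zero fun j hj => hh a j (fun e => ha (e ▸ hj))
    rw [add_assoc, ← add_assoc (∑ j ∈ t, h a j), h0, zero_add]

theorem square_sum {n : ℕ} {A : Type*} [Ring A] [Algebra ℝ A] (m : Fin n → A) (w : Fin n → ℝ)
    (hsq : ∀ i, m i * m i = algebraMap ℝ A (w i))
    (hanti : ∀ i j, i ≠ j → m i * m j = -(m j * m i)) (v : Fin n → ℝ) :
    (∑ i, v i • m i) * (∑ i, v i • m i) = algebraMap ℝ A (∑ i, w i • (v i * v i)) := by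
  rw [Finset.sum_mul_sum]
  have step : ∀ i j : Fin n, (v i • m i) * (v j • m j) = (v i * v j) • (m i * m j) := fun i j =>
    smul_mul_smul_comm (v i) (m i) (v j) (m j)
  simp only [step]
  rw [sum_sum_eq_diag _ _ (fun i j hij => by
    rw [hanti i j hij, smul_neg, mul_comm (v i)]
    exact neg_add_cancel _)]
  rw [map_sum]
  refine Finset.sum_congr rfl fun i _ => ?_
  rw [hsq, Algebra.smul_def, ← map_mul, smul_eq_mul, mul_comm]

variable (p q : ℕ)

theorem Qpq_apply (v : Fin (p + q) → ℝ) :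
    Qpq p q v = ∑ i : Fin (p + q), (if (i : ℕ) < p then (1 : ℝ) else -1) • (v i * v i) :=
  QuadraticMap.weightedSumSquares_apply _ _

/-- `Pi.single` with its family annotated. -/
noncomputable def sng {n : ℕ} (i : Fin n) : Fin n → ℝ := Pi.single i 1

theorem sng_apply {n : ℕ} (i k : Fin n) : sng i k = if k = i then 1 else 0 :=
  Pi.single_apply i 1 k

/-- The `i`-th generator of `CliffordAlgebra (Qpq p q)`. -/
noncomputable def g (i : Fin (p + q)) : CliffordAlgebra (Qpq p q) :=
  ι (Qpq p q) (sng i)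

theorem g_sq (i : Fin (p + q)) :
    g p q i * g p q i = algebraMap ℝ _ (if (i : ℕ) < p then (1 : ℝ) else -1) := by
  rw [g, ι_sq_scalar]
  congr 1
  rw [Qpq_apply, Finset.sum_eq_single i
    (fun b _ hb => by simp [sng_apply, hb]) (by simp)]
  simp [sng_apply]

theorem g_ortho {i j : Fin (p + q)} (h : i ≠ j) :
    (Qpq p q).IsOrtho (sng i) (sng j) := by
  have hz : ∀ k : Fin (p + q), sng i k * sng j k = 0 := by
    intro k
    rcases eq_or_ne k i with rfl | hk
    · rw [sng_apply j k, if_neg h, mul_zero]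
    · rw [sng_apply i k, if_neg hk, zero_mul]
  show Qpq p q _ = _
  rw [Qpq_apply, Qpq_apply, Qpq_apply, ← Finset.sum_add_distrib]
  refine Finset.sum_congr rfl fun k _ => ?_
  rw [← smul_add]
  congr 1
  have := hz k
  simp only [Pi.add_apply]
  linear_combination 2 * this

theorem g_anticomm {i j : Fin (p + q)} (h : i ≠ j) :
    g p q i * g p q j = -(g p q j * g p q i) :=
  ι_mul_ι_comm_of_isOrtho (g_ortho p q h)

theorem ι_eq_sum (v : Fin (p + q) → ℝ) :
    ι (Qpq p q) v = ∑ i, v i • g p q i := by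
  have hv : v = ∑ i, v i • sng i := by
    funext k
    rw [Finset.sum_apply]
    rw [Finset.sum_eq_single k (fun b _ hb => by
      simp [sng_apply, Ne.symm hb]) (by simp)]
    simp [sng_apply]
  conv_lhs => rw [hv, map_sum]
  refine Finset.sum_congr rfl fun i _ => ?_
  rw [g, map_smul]

theorem sum_sng_smul {n : ℕ} {A : Type*} [AddCommMonoid A] [Module ℝ A]
    (m : Fin n → A) (i : Fin n) : ∑ k, sng i k • m k = m i := by
  rw [Finset.sum_eq_single i (fun b _ hb => by simp [sng_apply, hb]) (by simp)]
  simp [sng_apply]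

section Main

variable (p q : ℕ)

/-- index of the first extra negative generator -/
def i1 : Fin (p + (q + 2)) := ⟨p + q, by omega⟩

/-- index of the second extra negative generator -/
def i2 : Fin (p + (q + 2)) := ⟨p + q + 1, by omega⟩

/-- the pseudoscalar of the two extra generators -/
noncomputable def om : CliffordAlgebra (Qpq p (q + 2)) :=
  g p (q + 2) (i1 p q) * g p (q + 2) (i2 p q)

theorem e1_sq : g p (q + 2) (i1 p q) * g p (q + 2) (i1 p q) = algebraMap ℝ _ (-1) := by
  rw [g_sq, if_neg (show ¬((i1 p q : Fin _) : ℕ) < p by simp only [i1]; omega)]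

theorem e2_sq : g p (q + 2) (i2 p q) * g p (q + 2) (i2 p q) = algebraMap ℝ _ (-1) := by
  rw [g_sq, if_neg (show ¬((i2 p q : Fin _) : ℕ) < p by simp only [i2]; omega)]

theorem e2_e1 : g p (q + 2) (i2 p q) * g p (q + 2) (i1 p q) = -(om p q) :=
  g_anticomm _ _ (Fin.ne_of_val_ne (by simp [i1, i2]))

theorem om_sq : om p q * om p q = algebraMap ℝ _ (-1) := by
  calc om p q * om p q
      = g p (q+2) (i1 p q) * (g p (q+2) (i2 p q) * g p (q+2) (i1 p q)) * g p (q+2) (i2 p q) := by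
        rw [om]; noncomm_ring
    _ = -(g p (q+2) (i1 p q) * g p (q+2) (i1 p q) * (g p (q+2) (i2 p q) * g p (q+2) (i2 p q))) := by
        rw [e2_e1, om]; noncomm_ring
    _ = algebraMap ℝ _ (-1) := by
        rw [e1_sq, e2_sq, ← map_mul, ← map_neg]; norm_num

theorem om_comm {i : Fin (p + (q + 2))} (h : (i : ℕ) < p + q) :
    om p q * g p (q + 2) i = g p (q + 2) i * om p q := by
  have a2 : g p (q+2) (i2 p q) * g p (q+2) i = -(g p (q+2) i * g p (q+2) (i2 p q)) :=
    g_anticomm _ _ (Fin.ne_of_val_ne (by simp [i2]; omega))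
  have a1 : g p (q+2) (i1 p q) * g p (q+2) i = -(g p (q+2) i * g p (q+2) (i1 p q)) :=
    g_anticomm _ _ (Fin.ne_of_val_ne (by simp [i1]; omega))
  calc om p q * g p (q+2) i
      = g p (q+2) (i1 p q) * (g p (q+2) (i2 p q) * g p (q+2) i) := by rw [om]; noncomm_ring
    _ = -(g p (q+2) (i1 p q) * g p (q+2) i * g p (q+2) (i2 p q)) := by rw [a2]; noncomm_ring
    _ = -(-(g p (q+2) i * g p (q+2) (i1 p q)) * g p (q+2) (i2 p q)) := by rw [a1]
    _ = g p (q+2) i * om p q := by rw [om]; noncomm_ring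

/-- the embedding of indices of `Qpq q p` into those of `Qpq p (q+2)` -/
def sig (j : Fin (q + p)) : Fin (p + (q + 2)) :=
  if h : (j : ℕ) < q then ⟨p + j, by omega⟩ else ⟨(j : ℕ) - q, by omega⟩

theorem sig_lt (j : Fin (q + p)) : ((sig p q j : Fin (p + (q + 2))) : ℕ) < p + q := by
  rw [sig]; split <;> (simp only []; omega)

/-- the inverse embedding -/
def tau (i : Fin (p + (q + 2))) (h : (i : ℕ) < p + q) : Fin (q + p) :=
  if hp : (i : ℕ) < p then ⟨q + i, by omega⟩ else ⟨(i : ℕ) - p, by omega⟩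

theorem sig_val (j : Fin (q + p)) :
    ((sig p q j : Fin (p + (q + 2))) : ℕ) = if (j : ℕ) < q then p + j else (j : ℕ) - q := by
  rw [sig]; split_ifs <;> rfl

theorem tau_val (i : Fin (p + (q + 2))) (h : (i : ℕ) < p + q) :
    ((tau p q i h : Fin (q + p)) : ℕ) = if (i : ℕ) < p then q + i else (i : ℕ) - p := by
  rw [tau]; split_ifs <;> rfl

theorem sig_tau (i : Fin (p + (q + 2))) (h : (i : ℕ) < p + q) : sig p q (tau p q i h) = i := by
  apply Fin.ext
  rw [sig_val, tau_val]
  split_ifs <;> omega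

theorem tau_sig (j : Fin (q + p)) : tau p q (sig p q j) (sig_lt p q j) = j := by
  apply Fin.ext
  rw [tau_val, sig_val]
  split_ifs <;> omega

theorem sig_inj {j j' : Fin (q + p)} (h : sig p q j = sig p q j') : j = j' := by
  rw [← tau_sig p q j, ← tau_sig p q j']
  congr 1

/-- images in `Cl_{p,q+2}` of the generators of `Cl_{q,p}` -/
noncomputable def mB (j : Fin (q + p)) : CliffordAlgebra (Qpq p (q + 2)) :=
  g p (q + 2) (sig p q j) * om p q

theorem mB_mul (j j' : Fin (q + p)) :
    mB p q j * mB p q j' =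
      g p (q + 2) (sig p q j) * g p (q + 2) (sig p q j') * algebraMap ℝ _ (-1) := by
  calc mB p q j * mB p q j'
      = g p (q+2) (sig p q j) * (om p q * g p (q+2) (sig p q j')) * om p q := by
        rw [mB, mB]; noncomm_ring
    _ = g p (q+2) (sig p q j) * (g p (q+2) (sig p q j') * om p q) * om p q := by
        rw [om_comm p q (sig_lt p q j')]
    _ = g p (q+2) (sig p q j) * g p (q+2) (sig p q j') * (om p q * om p q) := by noncomm_ring
    _ = _ := by rw [om_sq]

theorem mB_sq (j : Fin (q + p)) :
    mB p q j * mB p q j = algebraMap ℝ _ (if (j : ℕ) < q then (1 : ℝ) else -1) := by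
  rw [mB_mul, g_sq, ← map_mul]
  congr 1
  rcases lt_or_ge (j : ℕ) q with h | h
  · have hv : ((sig p q j : Fin _) : ℕ) = p + j := by rw [sig, dif_pos h]
    rw [hv, if_neg (by omega), if_pos h]; norm_num
  · have hv : ((sig p q j : Fin _) : ℕ) = (j : ℕ) - q := by rw [sig, dif_neg (by omega)]
    rw [hv, if_pos (by omega), if_neg (by omega)]; norm_num

theorem mB_anti (j j' : Fin (q + p)) (h : j ≠ j') : mB p q j * mB p q j' = -(mB p q j' * mB p q j) := by
  rw [mB_mul, mB_mul, g_anticomm _ _ (fun e => h (sig_inj p q e)), neg_mul]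

/-- the linear map underlying `G1` -/
noncomputable def gBlin : (Fin (q + p) → ℝ) →ₗ[ℝ] CliffordAlgebra (Qpq p (q + 2)) :=
  ∑ j, (LinearMap.proj j).smulRight (mB p q j)

theorem gBlin_apply (v : Fin (q + p) → ℝ) : gBlin p q v = ∑ j, v j • mB p q j := by
  simp [gBlin]

/-- first factor of the inverse map -/
noncomputable def G1 : CliffordAlgebra (Qpq q p) →ₐ[ℝ] CliffordAlgebra (Qpq p (q + 2)) :=
  CliffordAlgebra.lift (Qpq q p) ⟨gBlin p q, fun v => by
    rw [gBlin_apply, square_sum (mB p q) _ (mB_sq p q) (mB_anti p q) v, Qpq_apply]⟩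

theorem G1_ι (v : Fin (q + p) → ℝ) :
    G1 p q (CliffordAlgebra.ι (Qpq q p) v) = ∑ j, v j • mB p q j := by
  rw [G1, CliffordAlgebra.lift_ι_apply, gBlin_apply]

theorem G1_g (j : Fin (q + p)) : G1 p q (g q p j) = mB p q j := by
  rw [g, G1_ι, sum_sng_smul]

/-- the quaternion basis inside `Cl_{p,q+2}` -/
noncomputable def basA :
    QuaternionAlgebra.Basis (CliffordAlgebra (Qpq p (q + 2))) (-1 : ℝ) 0 (-1 : ℝ) where
  i := g p (q + 2) (i1 p q)
  j := g p (q + 2) (i2 p q)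
  k := om p q
  i_mul_i := by rw [e1_sq, Algebra.algebraMap_eq_smul_one, zero_smul, add_zero]
  j_mul_j := by rw [e2_sq, Algebra.algebraMap_eq_smul_one]
  i_mul_j := rfl
  j_mul_i := by rw [e2_e1 p q, zero_smul, zero_sub]

/-- second factor of the inverse map -/
noncomputable def G2 : ℍ[ℝ,-1,-1] →ₐ[ℝ] CliffordAlgebra (Qpq p (q + 2)) :=
  (basA p q).liftHom

theorem G2_apply (x : ℍ[ℝ,-1,-1]) :
    G2 p q x = algebraMap ℝ _ x.re + x.imI • g p (q + 2) (i1 p q)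
      + x.imJ • g p (q + 2) (i2 p q) + x.imK • om p q := rfl

theorem G1_commute_of (y : CliffordAlgebra (Qpq p (q + 2)))
    (hy : ∀ j : Fin (q + p), Commute (mB p q j) y) (b : CliffordAlgebra (Qpq q p)) :
    Commute (G1 p q b) y := by
  induction b using CliffordAlgebra.induction with
  | algebraMap r => rw [AlgHom.commutes]; exact Algebra.commute_algebraMap_left r y
  | ι v =>
    rw [G1_ι]
    exact Commute.sum_left _ _ _ (fun j _ => (hy j).smul_left (v j))
  | mul a b ha hb => rw [map_mul]; exact ha.mul_left hb
  | add a b ha hb => rw [map_add]; exact ha.add_left hb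

theorem mB_commute_e1 (j : Fin (q + p)) :
    Commute (mB p q j) (g p (q + 2) (i1 p q)) := by
  have hne : i1 p q ≠ sig p q j := Fin.ne_of_val_ne (by
    have := sig_lt p q j
    simp only [i1]
    omega)
  have a1 : g p (q+2) (i1 p q) * g p (q+2) (sig p q j)
      = -(g p (q+2) (sig p q j) * g p (q+2) (i1 p q)) := g_anticomm _ _ hne
  have a2 : g p (q+2) (i2 p q) * g p (q+2) (i1 p q) = -(g p (q+2) (i1 p q) * g p (q+2) (i2 p q)) :=
    e2_e1 p q
  show mB p q j * g p (q+2) (i1 p q) = g p (q+2) (i1 p q) * mB p q j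
  set x := g p (q+2) (sig p q j)
  set u := g p (q+2) (i1 p q)
  set v := g p (q+2) (i2 p q)
  calc (x * (u * v)) * u
      = x * u * (v * u) := by noncomm_ring
    _ = x * u * (-(u * v)) := by rw [a2]
    _ = (-(x * u)) * (u * v) := by noncomm_ring
    _ = (u * x) * (u * v) := by rw [a1]
    _ = u * (x * (u * v)) := by noncomm_ring

theorem mB_commute_e2 (j : Fin (q + p)) :
    Commute (mB p q j) (g p (q + 2) (i2 p q)) := by
  have hne : i2 p q ≠ sig p q j := Fin.ne_of_val_ne (by
    have := sig_lt p q j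
    simp only [i2]
    omega)
  have a1 : g p (q+2) (i2 p q) * g p (q+2) (sig p q j)
      = -(g p (q+2) (sig p q j) * g p (q+2) (i2 p q)) := g_anticomm _ _ hne
  have a2 : g p (q+2) (i2 p q) * g p (q+2) (i1 p q) = -(g p (q+2) (i1 p q) * g p (q+2) (i2 p q)) :=
    e2_e1 p q
  show mB p q j * g p (q+2) (i2 p q) = g p (q+2) (i2 p q) * mB p q j
  set x := g p (q+2) (sig p q j)
  set u := g p (q+2) (i1 p q)
  set v := g p (q+2) (i2 p q)
  calc (x * (u * v)) * v
      = x * (u * v) * v := by noncomm_ring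
    _ = -(x * (v * u) * v) := by rw [a2]; noncomm_ring
    _ = -((x * v) * (u * v)) := by noncomm_ring
    _ = -(-(v * x) * (u * v)) := by rw [a1]; noncomm_ring
    _ = v * (x * (u * v)) := by noncomm_ring

theorem hcomm (b : CliffordAlgebra (Qpq q p)) (x : ℍ[ℝ,-1,-1]) :
    Commute (G1 p q b) (G2 p q x) := by
  have h1 : Commute (G1 p q b) (g p (q+2) (i1 p q)) :=
    G1_commute_of p q _ (mB_commute_e1 p q) b
  have h2 : Commute (G1 p q b) (g p (q+2) (i2 p q)) :=
    G1_commute_of p q _ (mB_commute_e2 p q) b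
  rw [G2_apply]
  exact ((((Algebra.commute_algebraMap_right _ _).add_right
    (h1.smul_right _)).add_right (h2.smul_right _)).add_right ((h1.mul_right h2).smul_right _))

/-- the inverse algebra homomorphism -/
noncomputable def G :
    (CliffordAlgebra (Qpq q p) ⊗[ℝ] ℍ[ℝ,-1,-1]) →ₐ[ℝ] CliffordAlgebra (Qpq p (q + 2)) :=
  Algebra.TensorProduct.lift (G1 p q) (G2 p q) (hcomm p q)

/-- the standard quaternion basis -/
noncomputable def bs : QuaternionAlgebra.Basis ℍ[ℝ,-1,-1] (-1 : ℝ) 0 (-1 : ℝ) :=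
  QuaternionAlgebra.Basis.self ℝ

theorem bs_ii : bs.i * bs.i = -1 := by
  rw [QuaternionAlgebra.Basis.i_mul_i]; simp

theorem bs_jj : bs.j * bs.j = -1 := by
  rw [QuaternionAlgebra.Basis.j_mul_j]; simp

theorem bs_kk : bs.k * bs.k = -1 := by
  rw [QuaternionAlgebra.Basis.k_mul_k]; simp

theorem bs_ki : bs.k * bs.i = bs.j := by
  rw [QuaternionAlgebra.Basis.k_mul_i]; simp

theorem bs_ik : bs.i * bs.k = -bs.j := by
  rw [QuaternionAlgebra.Basis.i_mul_k]; simp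

theorem bs_kj : bs.k * bs.j = -bs.i := by
  rw [QuaternionAlgebra.Basis.k_mul_j]; simp

theorem bs_jk : bs.j * bs.k = bs.i := by
  rw [QuaternionAlgebra.Basis.j_mul_k]; simp

/-- images in `Cl_{q,p} ⊗ ℍ` of the generators of `Cl_{p,q+2}` -/
noncomputable def mF (i : Fin (p + (q + 2))) : CliffordAlgebra (Qpq q p) ⊗[ℝ] ℍ[ℝ,-1,-1] :=
  if h : (i : ℕ) < p + q then (g q p (tau p q i h)) ⊗ₜ[ℝ] (-bs.k)
  else if (i : ℕ) = p + q then 1 ⊗ₜ[ℝ] bs.i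
  else 1 ⊗ₜ[ℝ] bs.j

theorem one_tmul_negone :
    (1 : CliffordAlgebra (Qpq q p)) ⊗ₜ[ℝ] (-1 : ℍ[ℝ,-1,-1])
      = algebraMap ℝ (CliffordAlgebra (Qpq q p) ⊗[ℝ] ℍ[ℝ,-1,-1]) (-1 : ℝ) := by
  rw [show (-1 : ℍ[ℝ,-1,-1]) = -(1 : ℍ[ℝ,-1,-1]) from rfl, TensorProduct.tmul_neg,
    ← Algebra.TensorProduct.one_def, map_neg, map_one]

theorem alg_tmul_negone (r : ℝ) :
    (algebraMap ℝ (CliffordAlgebra (Qpq q p)) r) ⊗ₜ[ℝ] (-1 : ℍ[ℝ,-1,-1])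
      = algebraMap ℝ (CliffordAlgebra (Qpq q p) ⊗[ℝ] ℍ[ℝ,-1,-1]) (-r : ℝ) := by
  rw [show (-1 : ℍ[ℝ,-1,-1]) = -(1 : ℍ[ℝ,-1,-1]) from rfl, TensorProduct.tmul_neg,
    ← Algebra.TensorProduct.algebraMap_apply, ← map_neg]

theorem mF_sq (i : Fin (p + (q + 2))) :
    mF p q i * mF p q i = algebraMap ℝ _ (if (i : ℕ) < p then (1 : ℝ) else -1) := by
  rcases lt_or_ge (i : ℕ) (p + q) with h | h
  · rw [mF, dif_pos h, Algebra.TensorProduct.tmul_mul_tmul, neg_mul_neg, bs_kk, g_sq, tau_val]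
    rcases lt_or_ge (i : ℕ) p with hp | hp
    · rw [if_pos hp, if_neg (by omega : ¬ q + (i : ℕ) < q), if_pos hp, alg_tmul_negone]
      norm_num
    · rw [if_neg (not_lt.mpr hp), if_pos (by omega : (i : ℕ) - p < q), if_neg (not_lt.mpr hp),
        alg_tmul_negone]
  · rcases eq_or_ne ((i : ℕ)) (p + q) with h2 | h2
    · rw [mF, dif_neg (not_lt.mpr h), if_pos h2, if_neg (show ¬ (i : ℕ) < p by omega),
        Algebra.TensorProduct.tmul_mul_tmul, one_mul, bs_ii, one_tmul_negone]
    · rw [mF, dif_neg (not_lt.mpr h), if_neg h2, if_neg (show ¬ (i : ℕ) < p by omega),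
        Algebra.TensorProduct.tmul_mul_tmul, one_mul, bs_jj, one_tmul_negone]

theorem tau_ne {i j : Fin (p + (q + 2))} (h : i ≠ j) (hi : (i : ℕ) < p + q)
    (hj : (j : ℕ) < p + q) : tau p q i hi ≠ tau p q j hj :=
  fun e => h (by rw [← sig_tau p q i hi, ← sig_tau p q j hj, e])

theorem mF_anti (i j : Fin (p + (q + 2))) (h : i ≠ j) :
    mF p q i * mF p q j = -(mF p q j * mF p q i) := by
  have hv : (i : ℕ) ≠ (j : ℕ) := fun e => h (Fin.ext e)
  rcases lt_or_ge (i : ℕ) (p + q) with hi | hi <;> rcases lt_or_ge (j : ℕ) (p + q) with hj | hj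
  · simp only [mF, dif_pos hi, dif_pos hj, Algebra.TensorProduct.tmul_mul_tmul, neg_mul_neg,
      bs_kk]
    rw [g_anticomm _ _ (tau_ne p q h hi hj), TensorProduct.neg_tmul]
  · rcases eq_or_ne ((j : ℕ)) (p + q) with dj | dj
    · simp only [mF, dif_pos hi, dif_neg (not_lt.mpr hj), if_pos dj,
        Algebra.TensorProduct.tmul_mul_tmul, one_mul, mul_one, neg_mul, mul_neg,
        bs_ki, bs_ik, neg_neg]
      rw [TensorProduct.tmul_neg]
    · simp only [mF, dif_pos hi, dif_neg (not_lt.mpr hj), if_neg dj,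
        Algebra.TensorProduct.tmul_mul_tmul, one_mul, mul_one, neg_mul, mul_neg,
        bs_kj, bs_jk, neg_neg]
      rw [TensorProduct.tmul_neg, neg_neg]
  · rcases eq_or_ne ((i : ℕ)) (p + q) with di | di
    · simp only [mF, dif_pos hj, dif_neg (not_lt.mpr hi), if_pos di,
        Algebra.TensorProduct.tmul_mul_tmul, one_mul, mul_one, neg_mul, mul_neg,
        bs_ki, bs_ik, neg_neg]
      rw [TensorProduct.tmul_neg, neg_neg]
    · simp only [mF, dif_pos hj, dif_neg (not_lt.mpr hi), if_neg di,
        Algebra.TensorProduct.tmul_mul_tmul, one_mul, mul_one, neg_mul, mul_neg,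
        bs_kj, bs_jk, neg_neg]
      rw [TensorProduct.tmul_neg]
  · rcases eq_or_ne ((i : ℕ)) (p + q) with di | di <;> rcases eq_or_ne ((j : ℕ)) (p + q) with dj | dj
    · exact absurd (di.trans dj.symm) hv
    · simp only [mF, dif_neg (not_lt.mpr hi), dif_neg (not_lt.mpr hj), if_pos di, if_neg dj,
        Algebra.TensorProduct.tmul_mul_tmul, one_mul, QuaternionAlgebra.Basis.i_mul_j,
        QuaternionAlgebra.Basis.j_mul_i, zero_smul, zero_sub, TensorProduct.tmul_neg, neg_neg]
    · simp only [mF, dif_neg (not_lt.mpr hi), dif_neg (not_lt.mpr hj), if_neg di, if_pos dj,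
        Algebra.TensorProduct.tmul_mul_tmul, one_mul, QuaternionAlgebra.Basis.i_mul_j,
        QuaternionAlgebra.Basis.j_mul_i, zero_smul, zero_sub, TensorProduct.tmul_neg, neg_neg]
    · have h1 := i.isLt
      have h2 := j.isLt
      exact absurd (by omega : (i : ℕ) = (j : ℕ)) hv

/-- the linear map underlying `F` -/
noncomputable def fFlin :
    (Fin (p + (q + 2)) → ℝ) →ₗ[ℝ] (CliffordAlgebra (Qpq q p) ⊗[ℝ] ℍ[ℝ,-1,-1]) :=
  ∑ i, (LinearMap.proj i).smulRight (mF p q i)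

theorem fFlin_apply (v : Fin (p + (q + 2)) → ℝ) : fFlin p q v = ∑ i, v i • mF p q i := by
  simp [fFlin]

/-- the forward algebra homomorphism -/
noncomputable def F :
    CliffordAlgebra (Qpq p (q + 2)) →ₐ[ℝ] (CliffordAlgebra (Qpq q p) ⊗[ℝ] ℍ[ℝ,-1,-1]) :=
  CliffordAlgebra.lift (Qpq p (q + 2)) ⟨fFlin p q, fun v => by
    rw [fFlin_apply, square_sum (mF p q) _ (mF_sq p q) (mF_anti p q) v, Qpq_apply]⟩

theorem F_ι (v : Fin (p + (q + 2)) → ℝ) :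
    F p q (CliffordAlgebra.ι (Qpq p (q + 2)) v) = ∑ i, v i • mF p q i := by
  rw [F, CliffordAlgebra.lift_ι_apply, fFlin_apply]

theorem F_g (i : Fin (p + (q + 2))) : F p q (g p (q + 2) i) = mF p q i := by
  rw [g, F_ι, sum_sng_smul]

theorem G2_bsi : G2 p q bs.i = g p (q + 2) (i1 p q) := by
  simp [G2_apply, bs]

theorem G2_bsj : G2 p q bs.j = g p (q + 2) (i2 p q) := by
  simp [G2_apply, bs]

theorem G2_bsk : G2 p q bs.k = om p q := by
  simp [G2_apply, bs]

theorem G_mF (i : Fin (p + (q + 2))) : G p q (mF p q i) = g p (q + 2) i := by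
  rcases lt_or_ge (i : ℕ) (p + q) with h | h
  · rw [mF, dif_pos h, G, Algebra.TensorProduct.lift_tmul, G1_g, map_neg, G2_bsk, mB, sig_tau]
    calc g p (q+2) i * om p q * -(om p q) = -(g p (q+2) i * (om p q * om p q)) := by noncomm_ring
      _ = g p (q+2) i := by rw [om_sq, map_neg, map_one, mul_neg_one, neg_neg]
  · rcases eq_or_ne ((i : ℕ)) (p + q) with di | di
    · rw [mF, dif_neg (not_lt.mpr h), if_pos di, G, Algebra.TensorProduct.lift_tmul, map_one,
        one_mul, G2_bsi, show i1 p q = i from Fin.ext di.symm]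
    · rw [mF, dif_neg (not_lt.mpr h), if_neg di, G, Algebra.TensorProduct.lift_tmul, map_one,
        one_mul, G2_bsj, show i2 p q = i from Fin.ext (by have := i.isLt; simp only [i2]; omega)]

theorem hGF : (G p q).comp (F p q) = AlgHom.id ℝ (CliffordAlgebra (Qpq p (q + 2))) := by
  apply CliffordAlgebra.hom_ext
  apply LinearMap.ext
  intro v
  simp only [LinearMap.coe_comp, Function.comp_apply, AlgHom.toLinearMap_apply,
    AlgHom.comp_apply, AlgHom.id_apply]
  rw [F_ι, map_sum]
  simp_rw [map_smul, G_mF]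
  rw [← ι_eq_sum]

theorem mF_sig (j : Fin (q + p)) : mF p q (sig p q j) = g q p j ⊗ₜ[ℝ] (-bs.k) := by
  rw [mF, dif_pos (sig_lt p q j), tau_sig]

theorem mF_i1 : mF p q (i1 p q) = 1 ⊗ₜ[ℝ] bs.i := by
  rw [mF, dif_neg (show ¬ ((i1 p q : Fin _) : ℕ) < p + q by simp only [i1]; omega), if_pos (show ((i1 p q : Fin _) : ℕ) = p + q from rfl)]

theorem mF_i2 : mF p q (i2 p q) = 1 ⊗ₜ[ℝ] bs.j := by
  rw [mF, dif_neg (show ¬ ((i2 p q : Fin _) : ℕ) < p + q by simp only [i2]; omega),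
    if_neg (show ¬ ((i2 p q : Fin _) : ℕ) = p + q by simp only [i2]; omega)]

theorem F_mB (j : Fin (q + p)) : F p q (mB p q j) = g q p j ⊗ₜ[ℝ] 1 := by
  rw [mB, om, map_mul, map_mul, F_g, F_g, F_g, mF_sig, mF_i1, mF_i2,
    Algebra.TensorProduct.tmul_mul_tmul, one_mul, QuaternionAlgebra.Basis.i_mul_j,
    Algebra.TensorProduct.tmul_mul_tmul, mul_one, neg_mul, bs_kk, neg_neg]

theorem hFG : (F p q).comp (G p q)
    = AlgHom.id ℝ (CliffordAlgebra (Qpq q p) ⊗[ℝ] ℍ[ℝ,-1,-1]) := by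
  refine Algebra.TensorProduct.ext ?_ ?_
  · apply CliffordAlgebra.hom_ext
    apply LinearMap.ext
    intro v
    simp only [LinearMap.coe_comp, Function.comp_apply, AlgHom.toLinearMap_apply,
      AlgHom.comp_apply, AlgHom.id_apply, Algebra.TensorProduct.includeLeft_apply]
    rw [show G p q ((CliffordAlgebra.ι (Qpq q p) v) ⊗ₜ[ℝ] 1) = G1 p q (CliffordAlgebra.ι (Qpq q p) v) by
      rw [G, Algebra.TensorProduct.lift_tmul, map_one, mul_one]]
    rw [G1_ι, map_sum]
    simp_rw [map_smul, F_mB, TensorProduct.smul_tmul']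
    rw [← TensorProduct.sum_tmul, ← ι_eq_sum]
  · refine QuaternionAlgebra.hom_ext ?_ ?_
    · show F p q (G p q ((Algebra.TensorProduct.includeRight : _ →ₐ[ℝ] _) bs.i)) = _
      rw [Algebra.TensorProduct.includeRight_apply, G, Algebra.TensorProduct.lift_tmul,
        map_one, one_mul, G2_bsi, F_g, mF_i1]
      rfl
    · show F p q (G p q ((Algebra.TensorProduct.includeRight : _ →ₐ[ℝ] _) bs.j)) = _
      rw [Algebra.TensorProduct.includeRight_apply, G, Algebra.TensorProduct.lift_tmul,
        map_one, one_mul, G2_bsj, F_g, mF_i2]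
      rfl

/-- the promised algebra equivalence -/
noncomputable def equiv : CliffordAlgebra (Qpq p (q + 2)) ≃ₐ[ℝ]
    (CliffordAlgebra (Qpq q p) ⊗[ℝ] ℍ[ℝ,-1,-1]) :=
  AlgEquiv.ofAlgHom (F p q) (G p q) (hFG p q) (hGF p q)

end Main

end CliffPeriod

open scoped TensorProduct in
theorem clifford_periodicity_minus_two (p q : ℕ) :
    Nonempty (CliffordAlgebra (Qpq p (q + 2)) ≃ₐ[ℝ]
      (CliffordAlgebra (Qpq q p) ⊗[ℝ] Quaternion ℝ)) :=
  ⟨CliffPeriod.equiv p q⟩
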